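/- arXiv:2605.02023 — 3 statements merged into one kernel-verified Lean document; each statement's English description precedes it below -/
import Mathlib

section
/- For every n ≥ 1 and t > 0, if z ∼ N(0, I₂) and v_j = (cos((j−1)π/n), sin((j−1)π/n)), then ℙ[min_{1≤j≤n} |⟨z, v_j⟩| ≥ t] = (2n/π) ∫₀^{π/(2n)} exp(−t²/(2 sin²θ)) dθ. -/
open Real MeasureTheory ProbabilityTheory Set

namespace TailAux

/-- the minimum of `|cos (φ - jπ/n)|` over `j : Fin n`. -/
noncomputable def m (n : ℕ) (φ : ℝ) : ℝ := ⨅ j : Fin n, |Real.cos (φ - (j : ℝ) * π / n)|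

lemma bdd {n : ℕ} (φ : ℝ) :
    BddBelow (Set.range fun j : Fin n => |Real.cos (φ - (j : ℝ) * π / n)|) :=
  (Set.finite_range _).bddBelow

lemma m_continuous {n : ℕ} (hn : 1 ≤ n) : Continuous (m n) := by
  have : Nonempty (Fin n) := ⟨⟨0, hn⟩⟩
  have h : ∀ φ, m n φ = Finset.univ.inf' Finset.univ_nonempty
      (fun j : Fin n => |Real.cos (φ - (j : ℝ) * π / n)|) := fun φ => by
    rw [Finset.inf'_univ_eq_ciInf]; rfl
  simp only [funext h]
  rw [continuous_iff_continuousAt]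
  intro x
  exact ContinuousAt.finset_inf'_apply Finset.univ_nonempty fun i _ =>
    ((continuous_abs.comp
      ((Real.continuous_cos.comp (continuous_id.sub continuous_const)))).continuousAt)

lemma m_nonneg {n : ℕ} (hn : 1 ≤ n) (φ : ℝ) : 0 ≤ m n φ := by
  have : Nonempty (Fin n) := ⟨⟨0, hn⟩⟩
  exact le_ciInf fun j => abs_nonneg _

lemma m_periodic {n : ℕ} (hn : 1 ≤ n) : Function.Periodic (m n) (π / n) := by
  have : Nonempty (Fin n) := ⟨⟨0, hn⟩⟩
  have hnR : (n : ℝ) ≠ 0 := Nat.cast_ne_zero.2 (by omega)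
  intro φ
  have : Set.range (fun j : Fin n => |Real.cos (φ + π / n - (j : ℝ) * π / n)|)
      = Set.range (fun j : Fin n => |Real.cos (φ - (j : ℝ) * π / n)|) := by
    ext x
    simp only [Set.mem_range]
    constructor
    · rintro ⟨j, rfl⟩
      rcases Nat.eq_zero_or_pos (j : ℕ) with h | h
      · refine ⟨⟨n - 1, by omega⟩, ?_⟩
        have hc : ((n - 1 : ℕ) : ℝ) = (n : ℝ) - 1 := by
          push_cast [Nat.cast_sub hn]; ring
        have : φ - ((n - 1 : ℕ) : ℝ) * π / n = (φ + π / n - (j : ℝ) * π / n) - π := by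
          rw [hc]; field_simp [h]; simp [h]; ring
        rw [this, Real.cos_sub_pi, abs_neg]
      · refine ⟨⟨(j : ℕ) - 1, by omega⟩, ?_⟩
        have hc : (((j : ℕ) - 1 : ℕ) : ℝ) = ((j : ℕ) : ℝ) - 1 := by
          push_cast [Nat.cast_sub h]; ring
        have : φ - (((j : ℕ) - 1 : ℕ) : ℝ) * π / n = φ + π / n - (j : ℝ) * π / n := by
          rw [hc]; field_simp; ring
        rw [this]
    · rintro ⟨k, rfl⟩
      rcases eq_or_ne (k : ℕ) (n - 1) with h | h
      · refine ⟨⟨0, by omega⟩, ?_⟩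
        have : φ + π / n - ((0 : ℕ) : ℝ) * π / n = (φ - (k : ℝ) * π / n) + π := by
          have : ((k : ℕ) : ℝ) = (n : ℝ) - 1 := by rw [h]; push_cast [Nat.cast_sub hn]; ring
          rw [this]; field_simp; ring
        rw [this, Real.cos_add_pi, abs_neg]
      · have hk : (k : ℕ) + 1 < n := by have := k.isLt; omega
        refine ⟨⟨(k : ℕ) + 1, hk⟩, ?_⟩
        have : φ + π / n - (((k : ℕ) + 1 : ℕ) : ℝ) * π / n = φ - (k : ℝ) * π / n := by
          push_cast; field_simp; ring
        rw [this]
  unfold m iInf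
  rw [this]

lemma sin_ge_sin {a θ x : ℝ} (hθ0 : 0 ≤ θ) (hθa : θ ≤ a) (ha : a ≤ π / 2)
    (hax : a ≤ x) (hx : x ≤ π - a) : Real.sin θ ≤ Real.sin x := by
  have ha0 : 0 ≤ a := hθ0.trans hθa
  have h1 : Real.sin θ ≤ Real.sin a :=
    Real.strictMonoOn_sin.monotoneOn ⟨by linarith, by linarith⟩ ⟨by linarith, ha⟩ hθa
  rcases le_or_gt x (π / 2) with h | h
  · exact h1.trans (Real.strictMonoOn_sin.monotoneOn ⟨by linarith, ha⟩ ⟨by linarith, h⟩ hax)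
  · rw [← Real.sin_pi_sub x]
    exact h1.trans (Real.strictMonoOn_sin.monotoneOn ⟨by linarith, ha⟩
      ⟨by linarith, by linarith⟩ (by linarith))

lemma nR_pos {n : ℕ} (hn : 1 ≤ n) : (0:ℝ) < n := by
  exact_mod_cast Nat.pos_of_ne_zero (by omega)

lemma a_le {n : ℕ} (hn : 1 ≤ n) : π / (2 * n) ≤ π / 2 := by
  have h := nR_pos hn
  have : (1:ℝ) ≤ (n:ℝ) := by exact_mod_cast hn
  apply div_le_div_of_nonneg_left pi_pos.le (by linarith) (by linarith)

lemma m_eval_add {n : ℕ} (hn : 1 ≤ n) {θ : ℝ} (h0 : 0 ≤ θ) (h1 : θ ≤ π / (2 * n)) :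
    m n (π / 2 + θ) = Real.sin θ := by
  have : Nonempty (Fin n) := ⟨⟨0, hn⟩⟩
  have hN := nR_pos hn
  have haπ : π / (2 * n) ≤ π / 2 := a_le hn
  have hsθ : 0 ≤ Real.sin θ := Real.sin_nonneg_of_nonneg_of_le_pi h0 (by linarith [pi_pos])
  have key : ∀ j : Fin n,
      |Real.cos (π / 2 + θ - (j : ℝ) * π / n)| = |Real.sin ((j : ℝ) * π / n - θ)| := by
    intro j
    rw [show π / 2 + θ - (j : ℝ) * π / n = π / 2 - ((j : ℝ) * π / n - θ) by ring,
      Real.cos_pi_div_two_sub]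
  apply le_antisymm
  · refine (ciInf_le (bdd _) ⟨0, by omega⟩).trans_eq ?_
    rw [key]
    simp [abs_of_nonpos, Real.sin_nonneg_of_nonneg_of_le_pi h0 (by linarith [pi_pos]), hsθ]
  · refine le_ciInf fun j => ?_
    rw [key]
    rcases Nat.eq_zero_or_pos (j : ℕ) with h | h
    · have : ((j : Fin n) : ℝ) = 0 := by exact_mod_cast h
      rw [this]
      simp [abs_of_nonpos, hsθ]
    · have hj1 : (1:ℝ) ≤ (j : ℕ) := by exact_mod_cast h
      have hjn : ((j:ℕ):ℝ) ≤ (n:ℝ) - 1 := by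
        have := j.isLt; have : ((j:ℕ):ℝ) ≤ (n:ℝ) - 1 := by
          have hh : (j:ℕ) ≤ n - 1 := by omega
          have := (Nat.cast_le (α := ℝ)).2 hh
          rwa [Nat.cast_sub hn, Nat.cast_one] at this
        exact this
      set x := ((j:ℕ):ℝ) * π / n - θ with hx
      have hax : π / (2 * n) ≤ x := by
        have : π / n - π / (2 * n) = π / (2 * n) := by field_simp; ring
        have hge : π / n ≤ ((j:ℕ):ℝ) * π / n := by
          rw [div_le_div_iff_of_pos_right hN]; nlinarith [pi_pos]
        simp only [hx]; linarith
      have hxu : x ≤ π - π / (2 * n) := by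
        have hmul : (π / (n:ℝ)) * n = π := div_mul_cancel₀ _ (ne_of_gt hN)
        have : ((j:ℕ):ℝ) * π / n ≤ π - π / n := by
          rw [div_le_iff₀ hN]; nlinarith [pi_pos]
        have h2 : π / (2 * n) ≤ π / n := by
          apply div_le_div_of_nonneg_left pi_pos.le hN (by linarith)
        simp only [hx]; linarith
      have hx0 : 0 ≤ x := le_trans (by positivity) hax
      have hapos : 0 < π / (2 * (n:ℝ)) := by positivity
      clear_value x
      have hxpi : x ≤ π := by linarith
      have hsx : 0 ≤ Real.sin x := Real.sin_nonneg_of_nonneg_of_le_pi hx0 hxpi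
      rw [abs_of_nonneg hsx]
      exact sin_ge_sin h0 h1 haπ hax hxu

lemma m_eval_sub {n : ℕ} (hn : 1 ≤ n) {θ : ℝ} (h0 : 0 ≤ θ) (h1 : θ ≤ π / (2 * n)) :
    m n (π / 2 - θ) = Real.sin θ := by
  have : Nonempty (Fin n) := ⟨⟨0, hn⟩⟩
  have hN := nR_pos hn
  have haπ : π / (2 * n) ≤ π / 2 := a_le hn
  have hsθ : 0 ≤ Real.sin θ := Real.sin_nonneg_of_nonneg_of_le_pi h0 (by linarith [pi_pos])
  have key : ∀ j : Fin n,
      |Real.cos (π / 2 - θ - (j : ℝ) * π / n)| = |Real.sin (θ + (j : ℝ) * π / n)| := by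
    intro j
    rw [show π / 2 - θ - (j : ℝ) * π / n = π / 2 - (θ + (j : ℝ) * π / n) by ring,
      Real.cos_pi_div_two_sub]
  apply le_antisymm
  · refine (ciInf_le (bdd _) ⟨0, by omega⟩).trans_eq ?_
    rw [key]
    norm_num [abs_of_nonneg hsθ]
  · refine le_ciInf fun j => ?_
    rw [key]
    rcases Nat.eq_zero_or_pos (j : ℕ) with h | h
    · have : ((j : Fin n) : ℝ) = 0 := by exact_mod_cast h
      rw [this]
      norm_num [abs_of_nonneg hsθ]
    · have hj1 : (1:ℝ) ≤ (j : ℕ) := by exact_mod_cast h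
      have hjn : ((j:ℕ):ℝ) ≤ (n:ℝ) - 1 := by
        have hh : (j:ℕ) ≤ n - 1 := by have := j.isLt; omega
        have := (Nat.cast_le (α := ℝ)).2 hh
        rwa [Nat.cast_sub hn, Nat.cast_one] at this
      set x := θ + ((j:ℕ):ℝ) * π / n with hx
      have h2 : π / (2 * n) ≤ π / n := by
        apply div_le_div_of_nonneg_left pi_pos.le hN (by linarith)
      have hax : π / (2 * n) ≤ x := by
        have hge : π / n ≤ ((j:ℕ):ℝ) * π / n := by
          rw [div_le_div_iff_of_pos_right hN]; nlinarith [pi_pos]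
        simp only [hx]; linarith
      have hxu : x ≤ π - π / (2 * n) := by
        have hmul : (π / (n:ℝ)) * n = π := div_mul_cancel₀ _ (ne_of_gt hN)
        have hle : ((j:ℕ):ℝ) * π / n ≤ π - π / n := by
          rw [div_le_iff₀ hN]; nlinarith [pi_pos]
        have hq : π / n - π / (2 * n) = π / (2 * n) := by field_simp; ring
        simp only [hx]; linarith
      have hx0 : 0 ≤ x := le_trans (by positivity) hax
      have hapos : 0 < π / (2 * (n:ℝ)) := by positivity
      clear_value x
      have hxpi : x ≤ π := by linarith
      have hsx : 0 ≤ Real.sin x := Real.sin_nonneg_of_nonneg_of_le_pi hx0 hxpi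
      rw [abs_of_nonneg hsx]
      exact sin_ge_sin h0 h1 haπ hax hxu

lemma prod_gaussian :
    (gaussianReal 0 1).prod (gaussianReal 0 1)
      = ((volume : Measure ℝ).prod volume).withDensity
          (fun p => gaussianPDF 0 1 p.1 * gaussianPDF 0 1 p.2) := by
  refine Measure.prod_eq fun s t hs ht => ?_
  rw [withDensity_apply _ (hs.prod ht), ← Measure.prod_restrict,
    lintegral_prod_mul (measurable_gaussianPDF 0 1).aemeasurable
      (measurable_gaussianPDF 0 1).aemeasurable,
    gaussianReal_apply 0 one_ne_zero s, gaussianReal_apply 0 one_ne_zero t]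

lemma integrable_mul_exp : Integrable (fun x : ℝ => x * Real.exp (-x ^ 2 / 2)) := by
  have h := integrable_rpow_mul_exp_neg_mul_sq (b := 2⁻¹) (by norm_num) (s := 1) (by norm_num)
  refine h.congr (Filter.Eventually.of_forall fun x => ?_)
  simp only [Real.rpow_one]
  ring_nf

lemma integral_r {a : ℝ} (ha : 0 ≤ a) :
    ∫ r in Ioi a, r * Real.exp (-r ^ 2 / 2) = Real.exp (-a ^ 2 / 2) := by
  have hderiv : ∀ x ∈ Ioi a, HasDerivAt (fun r : ℝ => -Real.exp (-r ^ 2 / 2))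
      (x * Real.exp (-x ^ 2 / 2)) x := by
    intro x _
    have h1 : HasDerivAt (fun r : ℝ => -r ^ 2 / 2) (-x) x := by
      have := ((hasDerivAt_pow 2 x).neg.div_const 2)
      refine this.congr_deriv ?_
      simp; ring
    have h2 := (h1.exp).neg
    refine h2.congr_deriv ?_
    ring
  have hcont : ContinuousWithinAt (fun r : ℝ => -Real.exp (-r ^ 2 / 2)) (Ici a) a := by
    apply Continuous.continuousWithinAt
    continuity
  have htend : Filter.Tendsto (fun r : ℝ => -Real.exp (-r ^ 2 / 2)) Filter.atTop (nhds 0) := by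
    rw [show (0:ℝ) = -0 by ring]
    apply Filter.Tendsto.neg
    apply Real.tendsto_exp_atBot.comp
    apply Filter.Tendsto.atBot_div_const (by norm_num : (0:ℝ) < 2)
    exact Filter.tendsto_neg_atBot_iff.2 (Filter.tendsto_pow_atTop (by norm_num))
  have := integral_Ioi_of_hasDerivAt_of_tendsto hcont hderiv
    (integrable_mul_exp.integrableOn) htend
  rw [this]; ring

lemma integral_indicator_r {c t : ℝ} (ht : 0 < t) (hc : 0 < c) :
    ∫ r in Ioi (0:ℝ), (Ici (t / c)).indicator (fun r => r * Real.exp (-r ^ 2 / 2)) r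
      = Real.exp (-(t ^ 2) / (2 * c ^ 2)) := by
  rw [setIntegral_indicator measurableSet_Ici]
  have h1 : Ioi (0:ℝ) ∩ Ici (t / c) = Ici (t / c) :=
    inter_eq_self_of_subset_right (fun x hx => lt_of_lt_of_le (div_pos ht hc) hx)
  rw [h1, integral_Ici_eq_integral_Ioi, integral_r (le_of_lt (div_pos ht hc))]
  congr 1
  field_simp

/-- The set of angles where the minimum exceeds the threshold has been reduced;
this is the inner function after the radial integral. -/
noncomputable def Ffun (n : ℕ) (t : ℝ) (φ : ℝ) : ℝ :=
  if 0 < m n φ then Real.exp (-(t ^ 2) / (2 * (m n φ) ^ 2)) else 0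

/-- The integrand in polar coordinates (without the normalizing constant). -/
noncomputable def Wfun (n : ℕ) (t : ℝ) (q : ℝ × ℝ) : ℝ :=
  Set.indicator {q' : ℝ × ℝ | t ≤ q'.1 * m n q'.2}
    (fun q' => q'.1 * Real.exp (-q'.1 ^ 2 / 2)) q

/-- The event set in `ℝ × ℝ`. -/
def Sset (n : ℕ) (t : ℝ) : Set (ℝ × ℝ) :=
  {p : ℝ × ℝ | t ≤ ⨅ j : Fin n,
    |p.1 * Real.cos ((j : ℝ) * π / n) + p.2 * Real.sin ((j : ℝ) * π / n)|}

/-- The real density of the 2-dimensional standard Gaussian. -/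
noncomputable def rho (p : ℝ × ℝ) : ℝ :=
  gaussianPDFReal 0 1 p.1 * gaussianPDFReal 0 1 p.2

lemma m_measurable {n : ℕ} (hn : 1 ≤ n) : Measurable (m n) := (m_continuous hn).measurable

lemma Ffun_measurable {n : ℕ} (hn : 1 ≤ n) (t : ℝ) : Measurable (Ffun n t) := by
  have hm : Measurable (m n) := m_measurable hn
  exact Measurable.ite (measurableSet_lt measurable_const hm)
    (Real.measurable_exp.comp (measurable_const.div ((hm.pow_const 2).const_mul 2)))
    measurable_const

lemma Ffun_bd {n : ℕ} (t : ℝ) (x : ℝ) : ‖Ffun n t x‖ ≤ 1 := by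
  unfold Ffun
  split_ifs with h
  · rw [Real.norm_eq_abs, abs_of_nonneg (Real.exp_pos _).le,
      show (1:ℝ) = Real.exp 0 from (Real.exp_zero).symm]
    apply Real.exp_le_exp.2
    apply div_nonpos_of_nonpos_of_nonneg (neg_nonpos.2 (sq_nonneg t)) (by positivity)
  · simp

lemma Sset_closed {n : ℕ} (hn : 1 ≤ n) (t : ℝ) : IsClosed (Sset n t) := by
  have hne : Nonempty (Fin n) := ⟨⟨0, hn⟩⟩
  have hrw : Sset n t = ⋂ j : Fin n, {p : ℝ × ℝ |
      t ≤ |p.1 * Real.cos ((j : ℝ) * π / n) + p.2 * Real.sin ((j : ℝ) * π / n)|} := by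
    ext p
    simp only [Sset, mem_setOf_eq, mem_iInter]
    exact le_ciInf_iff ((Set.finite_range _).bddBelow)
  rw [hrw]
  exact isClosed_iInter fun j => isClosed_le continuous_const (by fun_prop)

/-- The outer (angular) integral. -/
lemma angular {n : ℕ} (hn : 1 ≤ n) (t : ℝ) :
    ∫ φ in Ioo (-π) π, Ffun n t φ
      = (2 * (n:ℝ)) *
          (2 * ∫ θ in Ioc 0 (π / (2 * (n:ℝ))), Real.exp (-(t ^ 2) / (2 * Real.sin θ ^ 2))) := by
  have hN := nR_pos hn
  have hFmeas : Measurable (Ffun n t) := Ffun_measurable hn t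
  have hInt : ∀ a b : ℝ, IntervalIntegrable (Ffun n t) volume a b := by
    intro a b
    rw [intervalIntegrable_iff]
    exact Measure.integrableOn_of_bounded measure_Ioc_lt_top.ne
      hFmeas.aestronglyMeasurable (ae_of_all _ (Ffun_bd t))
  have hper : Function.Periodic (Ffun n t) (π / n) := by
    intro x
    unfold Ffun
    rw [m_periodic hn x]
  have h1 : ∫ φ in Ioo (-π) π, Ffun n t φ = ∫ φ in (-π)..π, Ffun n t φ := by
    rw [intervalIntegral.integral_of_le (by linarith [pi_pos]), integral_Ioc_eq_integral_Ioo]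
  have he : -π + ((2 * (n:ℤ)) • (π / (n:ℝ))) = π := by
    push_cast [zsmul_eq_mul]
    field_simp
    ring
  have h2 := hper.intervalIntegral_add_zsmul_eq (2 * n) (-π) hInt
  rw [he] at h2
  have h3 := hper.intervalIntegral_add_eq (-π) (π / 2 - π / (2 * n))
  have ha' : π / 2 - π / (2 * n) + π / n = π / 2 + π / (2 * n) := by
    field_simp
    ring
  rw [ha'] at h3
  have hsplit :
      ∫ x in (π / 2 - π / (2 * n))..(π / 2 + π / (2 * n)), Ffun n t x
        = (∫ x in (π / 2 - π / (2 * n))..(π / 2), Ffun n t x)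
          + ∫ x in (π / 2)..(π / 2 + π / (2 * n)), Ffun n t x :=
    (intervalIntegral.integral_add_adjacent_intervals (hInt _ _) (hInt _ _)).symm
  have key : ∀ s : ℝ → ℝ, (∀ x, 0 < x → x ≤ π / (2 * n) → m n (s x) = Real.sin x) →
      (∫ x in (0:ℝ)..(π / (2 * n)), Ffun n t (s x))
        = ∫ θ in Ioc 0 (π / (2 * (n:ℝ))), Real.exp (-(t ^ 2) / (2 * Real.sin θ ^ 2)) := by
    intro s hs
    rw [intervalIntegral.integral_of_le (by positivity)]
    apply setIntegral_congr_fun measurableSet_Ioc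
    intro x hx
    have hmx : m n (s x) = Real.sin x := hs x hx.1 hx.2
    have hsin : 0 < Real.sin x := by
      apply Real.sin_pos_of_pos_of_lt_pi hx.1
      have := a_le hn
      linarith [hx.2, pi_pos]
    unfold Ffun
    dsimp only
    rw [hmx, if_pos hsin]
  have hright : ∫ x in (π / 2)..(π / 2 + π / (2 * n)), Ffun n t x
      = ∫ θ in Ioc 0 (π / (2 * (n:ℝ))), Real.exp (-(t ^ 2) / (2 * Real.sin θ ^ 2)) := by
    have := intervalIntegral.integral_comp_add_left (a := (0:ℝ)) (b := π / (2 * n))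
      (Ffun n t) (π / 2)
    rw [add_zero] at this
    rw [← this]
    exact key (fun x => π / 2 + x) fun x hx0 hx1 => m_eval_add hn hx0.le hx1
  have hleft : ∫ x in (π / 2 - π / (2 * n))..(π / 2), Ffun n t x
      = ∫ θ in Ioc 0 (π / (2 * (n:ℝ))), Real.exp (-(t ^ 2) / (2 * Real.sin θ ^ 2)) := by
    have := intervalIntegral.integral_comp_sub_left (a := (0:ℝ)) (b := π / (2 * n))
      (Ffun n t) (π / 2)
    rw [sub_zero] at this
    rw [← this]
    exact key (fun x => π / 2 - x) fun x hx0 hx1 => m_eval_sub hn hx0.le hx1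
  rw [h1, h2, h3, hsplit, hleft, hright]
  push_cast [zsmul_eq_mul]
  ring

lemma rho_polar (p : ℝ × ℝ) :
    rho (polarCoord.symm p) = (2 * π)⁻¹ * Real.exp (-p.1 ^ 2 / 2) := by
  have hsymm : polarCoord.symm p = (p.1 * Real.cos p.2, p.1 * Real.sin p.2) := rfl
  rw [hsymm]
  unfold rho
  simp only [gaussianPDFReal_def, NNReal.coe_one, mul_one, sub_zero]
  rw [show (√(2 * π))⁻¹ * Real.exp (-(p.1 * Real.cos p.2) ^ 2 / 2)
      * ((√(2 * π))⁻¹ * Real.exp (-(p.1 * Real.sin p.2) ^ 2 / 2))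
      = (√(2 * π))⁻¹ * (√(2 * π))⁻¹
        * Real.exp (-(p.1 * Real.cos p.2) ^ 2 / 2 + -(p.1 * Real.sin p.2) ^ 2 / 2)
      by rw [Real.exp_add]; ring,
    ← mul_inv, Real.mul_self_sqrt (by positivity)]
  congr 1
  have hpt : (p.1 * Real.cos p.2) ^ 2 + (p.1 * Real.sin p.2) ^ 2 = p.1 ^ 2 := by
    have := Real.cos_sq_add_sin_sq p.2
    nlinarith [this]
  rw [Real.exp_eq_exp]
  linarith [hpt]

lemma polar_integrand {n : ℕ} (hn : 1 ≤ n) (t : ℝ) :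
    ∀ p ∈ polarCoord.target,
      p.1 • (Sset n t).indicator rho (polarCoord.symm p) = (2 * π)⁻¹ * Wfun n t p := by
  have hne : Nonempty (Fin n) := ⟨⟨0, hn⟩⟩
  intro p hp
  have hr : 0 < p.1 := hp.1
  have hiInf : (⨅ j : Fin n, |(p.1 * Real.cos p.2) * Real.cos ((j : ℝ) * π / n)
      + (p.1 * Real.sin p.2) * Real.sin ((j : ℝ) * π / n)|)
      = p.1 * m n p.2 := by
    rw [m, mul_iInf_of_nonneg hr.le]
    apply iInf_congr fun j => ?_
    rw [show (p.1 * Real.cos p.2) * Real.cos ((j : ℝ) * π / n)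
        + (p.1 * Real.sin p.2) * Real.sin ((j : ℝ) * π / n)
        = p.1 * Real.cos (p.2 - (j : ℝ) * π / n) by rw [Real.cos_sub]; ring,
      abs_mul, abs_of_nonneg hr.le]
  have hmemiff : polarCoord.symm p ∈ Sset n t ↔ t ≤ p.1 * m n p.2 := by
    have h0 : polarCoord.symm p ∈ Sset n t
        ↔ t ≤ ⨅ j : Fin n, |(p.1 * Real.cos p.2) * Real.cos ((j : ℝ) * π / n)
            + (p.1 * Real.sin p.2) * Real.sin ((j : ℝ) * π / n)| := Iff.rfl
    rw [h0, hiInf]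
  by_cases hmb : t ≤ p.1 * m n p.2
  · rw [Set.indicator_of_mem (hmemiff.2 hmb), rho_polar, Wfun,
      Set.indicator_of_mem (show p ∈ {q' : ℝ × ℝ | t ≤ q'.1 * m n q'.2} from hmb)]
    simp only [smul_eq_mul]
    ring
  · rw [Set.indicator_of_notMem (fun h => hmb (hmemiff.1 h)), Wfun,
      Set.indicator_of_notMem (show p ∉ {q' : ℝ × ℝ | t ≤ q'.1 * m n q'.2} from hmb)]
    simp

lemma inner_integral {n : ℕ} (hn : 1 ≤ n) {t : ℝ} (ht : 0 < t) (φ : ℝ) :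
    ∫ r in Ioi (0:ℝ), Wfun n t (r, φ) = Ffun n t φ := by
  by_cases hc : 0 < m n φ
  · rw [Ffun, if_pos hc]
    rw [show (∫ r in Ioi (0:ℝ), Wfun n t (r, φ))
        = ∫ r in Ioi (0:ℝ),
          (Ici (t / m n φ)).indicator (fun r => r * Real.exp (-r ^ 2 / 2)) r from ?_]
    · exact integral_indicator_r ht hc
    · apply setIntegral_congr_fun measurableSet_Ioi
      intro r _
      unfold Wfun
      simp only [Set.indicator_apply, mem_setOf_eq, mem_Ici, div_le_iff₀ hc]
  · rw [Ffun, if_neg hc]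
    have hz : ∀ r ∈ Ioi (0:ℝ), Wfun n t (r, φ) = (fun _ : ℝ => (0:ℝ)) r := by
      intro r hr
      unfold Wfun
      apply Set.indicator_of_notMem
      simp only [mem_setOf_eq, not_le]
      have hm : m n φ ≤ 0 := le_of_not_gt hc
      nlinarith [hr.out]
    rw [setIntegral_congr_fun measurableSet_Ioi hz, integral_zero]

end TailAux

open TailAux

/-- For `z ∼ N(0, I₂)` and `v j = (cos((j-1)π/n), sin((j-1)π/n))`,
`ℙ[min_j |⟨z, v j⟩| ≥ t] = (2n/π) ∫₀^{π/(2n)} exp(-t²/(2 sin² θ)) dθ`. -/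
theorem tail_prob_min_abs_inner (n : ℕ) (hn : 1 ≤ n) (t : ℝ) (ht : 0 < t) :
    (Measure.pi fun _ : Fin 2 => gaussianReal 0 1)
        {z | t ≤ ⨅ j : Fin n, |z 0 * Real.cos ((j : ℝ) * π / n)
          + z 1 * Real.sin ((j : ℝ) * π / n)|}
      = ENNReal.ofReal ((2 * n / π) *
          ∫ θ in Set.Icc 0 (π / (2 * n)), Real.exp (-(t ^ 2) / (2 * Real.sin θ ^ 2))) := by
  classical
  have hne : Nonempty (Fin n) := ⟨⟨0, hn⟩⟩
  have hN : (0:ℝ) < n := TailAux.nR_pos hn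
  have hS' : MeasurableSet (Sset n t) := (Sset_closed hn t).measurableSet
  -- Step A : transfer to the product measure on ℝ × ℝ
  have stepA : (Measure.pi fun _ : Fin 2 => gaussianReal 0 1)
      {z | t ≤ ⨅ j : Fin n, |z 0 * Real.cos ((j : ℝ) * π / n)
        + z 1 * Real.sin ((j : ℝ) * π / n)|}
      = ((gaussianReal 0 1).prod (gaussianReal 0 1)) (Sset n t) := by
    have := (measurePreserving_piFinTwo fun _ : Fin 2 =>
      gaussianReal 0 1).measure_preimage hS'.nullMeasurableSet
    rw [← this]
    rfl
  have stepB : ((gaussianReal 0 1).prod (gaussianReal 0 1)) (Sset n t)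
      = ENNReal.ofReal (∫ p in Sset n t, rho p ∂((volume : Measure ℝ).prod volume)) := by
    have hint : Integrable rho (((volume : Measure ℝ).prod volume).restrict (Sset n t)) :=
      (((integrable_gaussianPDFReal 0 1).mul_prod (integrable_gaussianPDFReal 0 1)) :
        Integrable rho ((volume : Measure ℝ).prod volume)).restrict
    have hnn : 0 ≤ᵐ[((volume : Measure ℝ).prod volume).restrict (Sset n t)] rho :=
      ae_of_all _ fun p =>
        mul_nonneg (gaussianPDFReal_nonneg 0 1 p.1) (gaussianPDFReal_nonneg 0 1 p.2)
    rw [TailAux.prod_gaussian, withDensity_apply _ hS',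
      ofReal_integral_eq_lintegral_ofReal hint hnn]
    apply lintegral_congr fun p => ?_
    unfold rho
    simp only [gaussianPDF_def]
    exact (ENNReal.ofReal_mul (gaussianPDFReal_nonneg 0 1 p.1)).symm
  have stepC : ∫ p in Sset n t, rho p ∂((volume : Measure ℝ).prod volume)
      = ∫ p in polarCoord.target, p.1 • ((Sset n t).indicator rho) (polarCoord.symm p) := by
    rw [show ((volume : Measure ℝ).prod volume) = (volume : Measure (ℝ × ℝ)) from rfl,
      ← integral_indicator hS', ← integral_comp_polarCoord_symm ((Sset n t).indicator rho)]
  have stepD : ∫ p in polarCoord.target, p.1 • ((Sset n t).indicator rho) (polarCoord.symm p)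
      = ∫ p in polarCoord.target, (2 * π)⁻¹ * Wfun n t p :=
    setIntegral_congr_fun polarCoord.open_target.measurableSet (polar_integrand hn t)
  have stepE : ∫ p in polarCoord.target, (2 * π)⁻¹ * Wfun n t p
      = (2 * π)⁻¹ * ∫ p in polarCoord.target, Wfun n t p := integral_const_mul _ _
  -- Fubini
  have hD : MeasurableSet {q' : ℝ × ℝ | t ≤ q'.1 * m n q'.2} :=
    (isClosed_le continuous_const
      (continuous_fst.mul ((m_continuous hn).comp continuous_snd))).measurableSet
  have hWmeas : Measurable (Wfun n t) := by
    unfold Wfun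
    exact (measurable_fst.mul (by fun_prop)).indicator hD
  have hWint : Integrable (Wfun n t)
      (((volume : Measure ℝ).restrict (Ioi 0)).prod
        ((volume : Measure ℝ).restrict (Ioo (-π) π))) := by
    apply Integrable.mono
      (((TailAux.integrable_mul_exp).restrict).mul_prod
        (integrableOn_const measure_Ioo_lt_top.ne
          : IntegrableOn (fun _ : ℝ => (1:ℝ)) _ _))
      hWmeas.aestronglyMeasurable
    apply ae_of_all
    intro q
    have h1 := norm_indicator_le_norm_self
      (s := {q' : ℝ × ℝ | t ≤ q'.1 * m n q'.2})
      (fun q' : ℝ × ℝ => q'.1 * Real.exp (-q'.1 ^ 2 / 2)) q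
    calc ‖Wfun n t q‖ ≤ ‖q.1 * Real.exp (-q.1 ^ 2 / 2)‖ := h1
      _ = ‖q.1 * Real.exp (-q.1 ^ 2 / 2) * 1‖ := by rw [mul_one]
  have stepF : ∫ p in polarCoord.target, Wfun n t p
      = ∫ φ in Ioo (-π) π, ∫ r in Ioi (0:ℝ), Wfun n t (r, φ) := by
    rw [show polarCoord.target = Ioi (0:ℝ) ×ˢ Ioo (-π) π from rfl,
      show ((volume : Measure (ℝ × ℝ)).restrict (Ioi (0:ℝ) ×ˢ Ioo (-π) π))
        = (((volume : Measure ℝ).restrict (Ioi 0)).prod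
            ((volume : Measure ℝ).restrict (Ioo (-π) π))) from (Measure.prod_restrict _ _).symm]
    exact integral_prod_symm (Wfun n t) hWint
  have stepG : ∫ φ in Ioo (-π) π, ∫ r in Ioi (0:ℝ), Wfun n t (r, φ)
      = ∫ φ in Ioo (-π) π, Ffun n t φ := by
    apply integral_congr_ae
    exact ae_of_all _ fun φ => inner_integral hn ht φ
  rw [stepA, stepB, stepC, stepD, stepE, stepF, stepG, TailAux.angular hn t,
    MeasureTheory.integral_Icc_eq_integral_Ioc]
  congr 1
  have hπ : (π : ℝ) ≠ 0 := Real.pi_ne_zero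
  field_simp
end

section
/- For every n ≥ 1 and p > 0, if z ∼ N(0, I₂) and v_j = (cos((j−1)π/n), sin((j−1)π/n)), then E[(min_{1≤j≤n} |⟨z, v_j⟩|)^p] = 2^{p/2} Γ(1 + p/2) · (2n/π) ∫₀^{π/(2n)} sin^p θ dθ. -/
open Real MeasureTheory ProbabilityTheory
open scoped NNReal ENNReal

noncomputable def latD (c x : ℝ) : ℝ := c * (2⁻¹ - |Int.fract (x / c) - 2⁻¹|)

variable {c x : ℝ}

lemma latD_nonneg (hc : 0 < c) : 0 ≤ latD c x := by
  have h1 : Int.fract (x / c) < 1 := Int.fract_lt_one _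
  have h2 : (0:ℝ) ≤ Int.fract (x / c) := Int.fract_nonneg _
  have h3 : |Int.fract (x / c) - 2⁻¹| ≤ 2⁻¹ := abs_le.2 ⟨by linarith, by linarith⟩
  have h4 : (0:ℝ) ≤ 2⁻¹ - |Int.fract (x / c) - 2⁻¹| := by linarith
  exact mul_nonneg hc.le h4

lemma latD_le (hc : 0 < c) : latD c x ≤ c / 2 := by
  have : 2⁻¹ - |Int.fract (x / c) - 2⁻¹| ≤ 2⁻¹ := by
    have := abs_nonneg (Int.fract (x / c) - 2⁻¹); linarith
  calc latD c x ≤ c * 2⁻¹ := mul_le_mul_of_nonneg_left this hc.le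
  _ = c / 2 := by ring

lemma latD_eq_self (hc : 0 < c) (h0 : 0 ≤ x) (h1 : x ≤ c / 2) : latD c x = x := by
  have hx0 : 0 ≤ x / c := div_nonneg h0 hc.le
  have hx1 : x / c < 1 := by
    rw [div_lt_one hc]; linarith
  have hf : Int.fract (x / c) = x / c := Int.fract_eq_self.2 ⟨hx0, hx1⟩
  have hx2 : x / c ≤ 2⁻¹ := by
    rw [div_le_iff₀ hc]; linarith
  rw [latD, hf, abs_of_nonpos (by linarith), show 2⁻¹ - -(x / c - 2⁻¹) = x / c by ring,
    mul_div_cancel₀ _ hc.ne']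

lemma latD_add_int (hc : 0 < c) (m : ℤ) : latD c (x + m * c) = latD c x := by
  rw [latD, latD, add_div, mul_div_assoc, div_self hc.ne', mul_one, Int.fract_add_intCast]

lemma latD_neg (hc : 0 < c) : latD c (-x) = latD c x := by
  rw [latD, latD, neg_div]
  rcases eq_or_ne (Int.fract (x / c)) 0 with h | h
  · rw [Int.fract_neg_eq_zero.2 h, h]
  · rw [Int.fract_neg h, show 1 - Int.fract (x / c) - 2⁻¹ = -(Int.fract (x / c) - 2⁻¹) by ring,
      abs_neg]

lemma latD_le_abs (hc : 0 < c) (m : ℤ) : latD c x ≤ |x - m * c| := by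
  set u := Int.fract (x / c) with hu
  have hx : x = ((⌊x / c⌋ : ℝ) + u) * c := by
    have h' : (⌊x / c⌋ : ℝ) + u = x / c := by rw [hu, Int.fract]; ring
    rw [h', div_mul_cancel₀ _ hc.ne']
  set j : ℤ := ⌊x / c⌋ - m with hj
  have hjr : (j:ℝ) = (⌊x / c⌋ : ℝ) - (m:ℝ) := by exact_mod_cast congrArg Int.cast hj
  have h2 : x - m * c = ((j:ℝ) + u) * c := by rw [hjr]; linear_combination hx
  have h1 : u < 1 := Int.fract_lt_one _
  have h0 : (0:ℝ) ≤ u := Int.fract_nonneg _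
  rw [h2, abs_mul, abs_of_pos hc]
  have key : 2⁻¹ - |u - 2⁻¹| ≤ |(j:ℝ) + u| := by
    rcases le_or_gt 0 j with hj0 | hj0
    · have hle : u ≤ (j:ℝ) + u := by
        have : (0:ℝ) ≤ (j:ℝ) := by exact_mod_cast hj0
        linarith
      have habs : u ≤ |(j:ℝ) + u| := le_trans hle (le_abs_self _)
      have : 2⁻¹ - |u - 2⁻¹| ≤ u := by
        rcases le_or_gt u 2⁻¹ with h | h
        · rw [abs_of_nonpos (by linarith)]; linarith
        · rw [abs_of_pos (by linarith)]; linarith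
      linarith
    · have hj1' : j ≤ -1 := by omega
      have hj1 : (j:ℝ) ≤ -1 := by exact_mod_cast hj1'
      have hle : 1 - u ≤ -((j:ℝ) + u) := by linarith
      have habs : 1 - u ≤ |(j:ℝ) + u| := le_trans hle (neg_le_abs _)
      have : 2⁻¹ - |u - 2⁻¹| ≤ 1 - u := by
        rcases le_or_gt u 2⁻¹ with h | h
        · rw [abs_of_nonpos (by linarith)]; linarith
        · rw [abs_of_pos (by linarith)]; linarith
      linarith
  calc latD c x = (2⁻¹ - |u - 2⁻¹|) * c := by rw [latD, mul_comm]
  _ ≤ |(j:ℝ) + u| * c := mul_le_mul_of_nonneg_right key hc.le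

lemma latD_exists (hc : 0 < c) (x : ℝ) : ∃ m : ℤ, |x - m * c| = latD c x := by
  set u := Int.fract (x / c) with hu
  have hx : x = ((⌊x / c⌋ : ℝ) + u) * c := by
    have h' : (⌊x / c⌋ : ℝ) + u = x / c := by rw [hu, Int.fract]; ring
    rw [h', div_mul_cancel₀ _ hc.ne']
  have h1 : u < 1 := Int.fract_lt_one _
  have h0 : (0:ℝ) ≤ u := Int.fract_nonneg _
  rcases le_or_gt u 2⁻¹ with h | h
  · refine ⟨⌊x / c⌋, ?_⟩
    have he : x - (⌊x / c⌋ : ℝ) * c = u * c := by linear_combination hx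
    rw [he, abs_of_nonneg (by positivity), latD, ← hu, abs_of_nonpos (by linarith)]
    ring
  · refine ⟨⌊x / c⌋ + 1, ?_⟩
    have he : x - ((⌊x / c⌋ + 1 : ℤ) : ℝ) * c = (u - 1) * c := by
      push_cast; linear_combination hx
    rw [he, abs_mul, abs_of_pos hc, abs_of_nonpos (by linarith), latD, ← hu,
      abs_of_pos (by linarith)]
    ring

lemma latD_abs (hc : 0 < c) (h : |x| ≤ c / 2) : latD c x = |x| := by
  rcases le_or_gt 0 x with h0 | h0
  · rw [abs_of_nonneg h0] at h ⊢; exact latD_eq_self hc h0 h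
  · rw [abs_of_neg h0] at h ⊢; rw [← latD_neg hc]; exact latD_eq_self hc (by linarith) h

lemma abs_sin_eq (x : ℝ) : |Real.sin x| = Real.sin (latD π x) := by
  set u := Int.fract (x / π) with hu
  have hx : x = π * u + ⌊x / π⌋ * π := by
    have h' : (⌊x / π⌋ : ℝ) + u = x / π := by rw [hu, Int.fract]; ring
    have h2 := congrArg (fun t : ℝ => π * t) h'
    simp only [mul_div_cancel₀ _ pi_ne_zero] at h2
    linarith [h2]
  have h1 : u < 1 := Int.fract_lt_one _
  have h0 : (0:ℝ) ≤ u := Int.fract_nonneg _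
  have hs : |Real.sin x| = Real.sin (π * u) := by
    rw [hx, Real.sin_add_int_mul_pi, abs_mul]
    have : |((-1:ℝ)) ^ ⌊x / π⌋| = 1 := by
      rcases Int.even_or_odd ⌊x / π⌋ with h | h
      · rw [h.neg_one_zpow, abs_one]
      · rw [h.neg_one_zpow, abs_neg, abs_one]
    rw [this, one_mul,
      abs_of_nonneg (Real.sin_nonneg_of_nonneg_of_le_pi (by positivity)
        (by nlinarith [pi_pos]))]
  have hld : latD π x = π * (2⁻¹ - |u - 2⁻¹|) := by rw [latD, ← hu]
  rw [hs, hld]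
  rcases le_or_gt u 2⁻¹ with h | h
  · rw [abs_of_nonpos (by linarith), show 2⁻¹ - -(u - 2⁻¹) = u by ring]
  · rw [abs_of_pos (by linarith), show π * (2⁻¹ - (u - 2⁻¹)) = π - π * u by ring,
      Real.sin_pi_sub]

lemma inf_abs_sin (n : ℕ) (hn : 1 ≤ n) (y : ℝ) :
    (⨅ j : Fin n, |Real.sin (y - (j:ℝ) * (π / n))|) = Real.sin (latD (π / n) y) := by
  haveI : Nonempty (Fin n) := ⟨⟨0, hn⟩⟩
  have hnR : (0:ℝ) < n := by positivity
  set c := π / n with hcdef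
  have hc : 0 < c := div_pos pi_pos hnR
  have hnc : (n:ℝ) * c = π := by rw [hcdef, mul_div_cancel₀ _ hnR.ne']
  have hcπ : c ≤ π := by
    rw [hcdef]
    exact div_le_self pi_pos.le (by exact_mod_cast hn)
  have hmem : latD c y ∈ Set.Icc (-(π/2)) (π/2) :=
    ⟨by linarith [latD_nonneg (x := y) hc, pi_pos], by linarith [latD_le (x := y) hc]⟩
  have lower : ∀ j : Fin n, Real.sin (latD c y) ≤ |Real.sin (y - (j:ℝ) * c)| := by
    intro j
    rw [abs_sin_eq]
    obtain ⟨m, hm⟩ := latD_exists pi_pos (y - (j:ℝ) * c)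
    have he : y - (j:ℝ) * c - m * π = y - ((((j:ℕ) : ℤ) + m * ((n:ℕ):ℤ) : ℤ) : ℝ) * c := by
      push_cast
      rw [← hnc]; ring
    have hle : latD c y ≤ latD π (y - (j:ℝ) * c) := by
      rw [← hm, he]
      exact latD_le_abs hc _
    have hmem2 : latD π (y - (j:ℝ) * c) ∈ Set.Icc (-(π/2)) (π/2) :=
      ⟨by linarith [latD_nonneg (x := y - (j:ℝ) * c) pi_pos, pi_pos],
        by linarith [latD_le (x := y - (j:ℝ) * c) pi_pos]⟩
    exact Real.strictMonoOn_sin.monotoneOn hmem hmem2 hle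
  obtain ⟨m, hm⟩ := latD_exists hc y
  have hn0 : (0:ℤ) < (n:ℤ) := by exact_mod_cast hn
  have hmodnn : 0 ≤ m % n := Int.emod_nonneg m hn0.ne'
  have hmodlt : m % n < n := Int.emod_lt_of_pos m hn0
  set j₀ : Fin n := ⟨(m % n).toNat, by omega⟩ with hj₀
  have hj₀R : ((j₀ : ℕ) : ℝ) = ((m % (n:ℤ) : ℤ) : ℝ) := by
    rw [hj₀]
    exact_mod_cast congrArg (fun t : ℤ => (t : ℝ)) (Int.toNat_of_nonneg hmodnn)
  have attained : |Real.sin (y - (j₀:ℝ) * c)| = Real.sin (latD c y) := by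
    have he : y - (j₀:ℝ) * c = (y - m * c) + (m / n : ℤ) * π := by
      rw [hj₀R, ← hnc]
      have : ((m % (n:ℤ) : ℤ) : ℝ) = (m:ℝ) - ((m / n : ℤ) : ℝ) * n := by
        have := Int.mul_ediv_add_emod m n
        have hcast : ((n * (m / n) + m % n : ℤ) : ℝ) = (m:ℝ) := by rw [this]
        push_cast at hcast
        linarith
      rw [this]; ring
    have hlef : |y - m * c| ≤ π / 2 := by
      rw [hm]
      have := latD_le (x := y) hc
      linarith
    rw [abs_sin_eq, he, latD_add_int pi_pos, latD_abs pi_pos hlef, hm]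
  apply le_antisymm
  · exact ciInf_le_of_le (Set.Finite.bddBelow (Set.finite_range _)) j₀ (le_of_eq attained)
  · exact le_ciInf lower

lemma latD_measurable (c : ℝ) : Measurable (latD c) := by
  unfold latD
  exact ((((measurable_id.div_const c).fract.sub measurable_const).abs.const_sub
    2⁻¹).const_mul c)

lemma angular_integral (n : ℕ) (hn : 1 ≤ n) (p : ℝ) (hp : 0 < p) :
    ∫ θ in Set.Ioo (-π) π, Real.sin (latD (π / n) (θ + π / 2)) ^ p
      = 4 * n * ∫ θ in Set.Icc 0 (π / (2 * n)), Real.sin θ ^ p := by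
  have hnR : (0:ℝ) < n := by positivity
  set c := π / n with hcdef
  have hc : 0 < c := div_pos pi_pos hnR
  have hcπ : c ≤ π := div_le_self pi_pos.le (by exact_mod_cast hn)
  set g : ℝ → ℝ := fun θ => Real.sin (latD c θ) ^ p with hg
  have hsin : ∀ θ, Real.sin (latD c θ) ∈ Set.Icc (0:ℝ) 1 := fun θ =>
    ⟨Real.sin_nonneg_of_nonneg_of_le_pi (latD_nonneg hc)
      (by linarith [latD_le (x := θ) hc]), Real.sin_le_one _⟩
  have hgbound : ∀ θ, g θ ∈ Set.Icc (0:ℝ) 1 := fun θ =>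
    ⟨Real.rpow_nonneg (hsin θ).1 p, Real.rpow_le_one (hsin θ).1 (hsin θ).2 hp.le⟩
  have hgmeas : Measurable g :=
    (Real.measurable_sin.comp (latD_measurable c)).pow_const p
  have hInt : ∀ a b : ℝ, IntervalIntegrable g volume a b := by
    intro a b
    rw [intervalIntegrable_iff]
    refine Measure.integrableOn_of_bounded (M := 1) measure_Ioc_lt_top.ne
      hgmeas.aestronglyMeasurable ?_
    filter_upwards with θ
    rw [Real.norm_eq_abs, abs_of_nonneg (hgbound θ).1]
    exact (hgbound θ).2
  have hper : Function.Periodic g c := by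
    intro θ
    simp only [hg]
    rw [show θ + c = θ + (1:ℤ) * c by push_cast; ring, latD_add_int hc]
  have heven : ∀ θ, g (-θ) = g θ := fun θ => by simp only [hg]; rw [latD_neg hc]
  have hcb : c / 2 = π / (2*n) := by rw [hcdef]; ring
  have h1 : ∫ θ in Set.Ioo (-π) π, g (θ + π/2) = ∫ θ in (-π)..π, g (θ + π/2) := by
    rw [intervalIntegral.integral_of_le (by linarith [pi_pos]), integral_Ioc_eq_integral_Ioo]
  have h2 : ∫ θ in (-π)..π, g (θ + π/2) = ∫ θ in (-π + π/2)..(π + π/2), g θ :=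
    intervalIntegral.integral_comp_add_right g (π/2)
  have h3 : ∫ θ in (-π + π/2)..(π + π/2), g θ = ((2*n : ℤ)) • ∫ θ in (0:ℝ)..c, g θ := by
    have e1 : -π + π/2 = -(π/2) := by ring
    have e2 : π + π/2 = -(π/2) + (2*(n:ℤ)) • c := by
      rw [zsmul_eq_mul]
      push_cast
      rw [hcdef]
      field_simp
      ring
    rw [e1, e2, hper.intervalIntegral_add_zsmul_eq _ _ hInt]
    congr 1
    have h := hper.intervalIntegral_add_eq (-(π/2)) 0
    rw [zero_add] at h
    exact h
  have hrefl : ∫ θ in (c/2)..c, g θ = ∫ θ in (0:ℝ)..(c/2), g θ := by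
    have hflip : ∀ θ, g θ = g (c - θ) := fun θ => by
      rw [show c - θ = -(θ - c) by ring, heven, hper.sub_eq]
    calc ∫ θ in (c/2)..c, g θ = ∫ θ in (c/2)..c, g (c - θ) := by
          apply intervalIntegral.integral_congr
          intro θ _
          exact hflip θ
    _ = ∫ θ in (c - c)..(c - c/2), g θ := intervalIntegral.integral_comp_sub_left g c
    _ = ∫ θ in (0:ℝ)..(c/2), g θ := by congr 1 <;> ring
  have h4 : ∫ θ in (0:ℝ)..c, g θ = 2 * ∫ θ in (0:ℝ)..(c/2), g θ := by
    have hsplit : (∫ θ in (0:ℝ)..(c/2), g θ) + ∫ θ in (c/2)..c, g θ = ∫ θ in (0:ℝ)..c, g θ :=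
      intervalIntegral.integral_add_adjacent_intervals (hInt 0 (c/2)) (hInt (c/2) c)
    rw [hrefl] at hsplit
    linarith
  have h5 : ∫ θ in (0:ℝ)..(c/2), g θ = ∫ θ in Set.Icc 0 (π/(2*n)), Real.sin θ ^ p := by
    rw [← hcb, intervalIntegral.integral_of_le (by linarith), ← integral_Icc_eq_integral_Ioc]
    refine setIntegral_congr_fun measurableSet_Icc (fun θ hθ => ?_)
    simp only [hg]
    rw [latD_eq_self hc hθ.1 hθ.2]
  rw [show (fun θ => Real.sin (latD (π / ↑n) (θ + π / 2)) ^ p) = fun θ => g (θ + π/2) by rfl]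
  rw [h1, h2, h3, h4, h5, zsmul_eq_mul]
  push_cast
  ring

lemma radial_integral (p : ℝ) (hp : 0 < p) :
    ∫ r in Set.Ioi (0:ℝ), r * Real.exp (-r^2/2) * r ^ p
      = 2 ^ (p/2) * Real.Gamma (1 + p/2) := by
  have h1 : ∀ r ∈ Set.Ioi (0:ℝ),
      r * Real.exp (-r^2/2) * r ^ p = r ^ (p+1) * Real.exp (-(1/2) * r ^ (2:ℝ)) := by
    intro r hr
    have hr0 : (0:ℝ) < r := hr
    have h2r : r ^ (2:ℝ) = r ^ (2:ℕ) := by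
      rw [← Real.rpow_natCast r 2]
      norm_num
    rw [Real.rpow_add hr0, Real.rpow_one, h2r,
      show -(1/2) * r ^ (2:ℕ) = -r^2/2 by ring]
    ring
  rw [setIntegral_congr_fun measurableSet_Ioi h1,
    integral_rpow_mul_exp_neg_mul_rpow two_pos (by linarith) (by norm_num : (0:ℝ) < 1/2)]
  have hΓ : (p+1+1)/2 = 1 + p/2 := by ring
  have h2 : ((1:ℝ)/2) ^ (-(p+1+1)/2) = 2 ^ ((p+1+1)/2) := by
    rw [one_div, Real.inv_rpow (by norm_num : (0:ℝ) ≤ 2),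
      ← Real.rpow_neg (by norm_num : (0:ℝ) ≤ 2), show -(-(p+1+1)/2) = (p+1+1)/2 by ring]
  rw [hΓ] at h2 ⊢
  rw [h2]
  have h3 : (2:ℝ) ^ (1 + p/2) = 2 * 2 ^ (p/2) := by
    rw [Real.rpow_add two_pos, Real.rpow_one]
  rw [h3]
  ring

/-- For `z ∼ N(0, I₂)` and `v j = (cos((j-1)π/n), sin((j-1)π/n))`,
`E[(min_j |⟨z, v j⟩|)^p] = 2^{p/2} Γ(1 + p/2) (2n/π) ∫₀^{π/(2n)} sin^p θ dθ`. -/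
theorem moment_min_abs_inner (n : ℕ) (hn : 1 ≤ n) (p : ℝ) (hp : 0 < p) :
    ∫ z, (⨅ j : Fin n, |z 0 * Real.cos ((j : ℝ) * π / n)
          + z 1 * Real.sin ((j : ℝ) * π / n)|) ^ p
        ∂(Measure.pi fun _ : Fin 2 => gaussianReal 0 1)
      = 2 ^ (p / 2) * Real.Gamma (1 + p / 2) *
          ((2 * n / π) * ∫ θ in Set.Icc 0 (π / (2 * n)), Real.sin θ ^ p) := by
  haveI : Nonempty (Fin n) := ⟨⟨0, hn⟩⟩
  have hnR : (0:ℝ) < n := by positivity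
  set c := π / n with hcdef
  have hc : 0 < c := div_pos pi_pos hnR
  have hcπ : c ≤ π := div_le_self pi_pos.le (by exact_mod_cast hn)
  set G : ℝ × ℝ → ℝ := fun q =>
    (⨅ j : Fin n, |q.1 * Real.cos ((j : ℝ) * π / n)
      + q.2 * Real.sin ((j : ℝ) * π / n)|) ^ p with hG
  have step1 : (∫ z, (⨅ j : Fin n, |z 0 * Real.cos ((j : ℝ) * π / n)
        + z 1 * Real.sin ((j : ℝ) * π / n)|) ^ p
        ∂(Measure.pi fun _ : Fin 2 => gaussianReal 0 1))
      = ∫ q, G q ∂((gaussianReal 0 1).prod (gaussianReal 0 1)) :=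
    MeasurePreserving.integral_comp' (measurePreserving_finTwoArrow (gaussianReal 0 1)) G
  have hmeasPDF : Measurable (gaussianPDF 0 1) :=
    (measurable_gaussianPDFReal 0 1).ennreal_ofReal
  have hprod : (gaussianReal 0 1).prod (gaussianReal 0 1)
      = (volume : Measure (ℝ × ℝ)).withDensity
          (fun q => gaussianPDF 0 1 q.1 * gaussianPDF 0 1 q.2) := by
    refine Measure.prod_eq (fun s t hs ht => ?_)
    rw [withDensity_apply _ (hs.prod ht), Measure.volume_eq_prod, ← Measure.prod_restrict,
      lintegral_prod_mul hmeasPDF.aemeasurable hmeasPDF.aemeasurable,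
      gaussianReal_of_var_ne_zero 0 one_ne_zero, withDensity_apply _ hs, withDensity_apply _ ht]
  set ρ : ℝ → ℝ := gaussianPDFReal 0 1 with hρ
  set f₀ : ℝ × ℝ → ℝ≥0 := fun q => (ρ q.1 * ρ q.2).toNNReal with hf₀
  have hden : (fun q : ℝ × ℝ => gaussianPDF 0 1 q.1 * gaussianPDF 0 1 q.2)
      = fun q => (f₀ q : ℝ≥0∞) := by
    funext q
    simp only [hf₀, gaussianPDF]
    rw [← ENNReal.ofReal_mul (gaussianPDFReal_nonneg 0 1 q.1)]
    rfl
  have hf₀meas : Measurable f₀ := (((measurable_gaussianPDFReal 0 1).comp measurable_fst).mul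
      ((measurable_gaussianPDFReal 0 1).comp measurable_snd)).real_toNNReal
  have step3 : ∫ q, G q ∂((volume : Measure (ℝ×ℝ)).withDensity fun q => (f₀ q : ℝ≥0∞))
      = ∫ q : ℝ × ℝ, (ρ q.1 * ρ q.2) * G q := by
    rw [integral_withDensity_eq_integral_smul hf₀meas]
    congr 1
    funext q
    rw [NNReal.smul_def, smul_eq_mul, hf₀, Real.coe_toNNReal _
      (mul_nonneg (gaussianPDFReal_nonneg 0 1 q.1) (gaussianPDFReal_nonneg 0 1 q.2))]
  have hρx : ∀ x : ℝ, ρ x = (√(2*π))⁻¹ * Real.exp (-x^2/2) := by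
    intro x
    simp [hρ, gaussianPDFReal]
  have hsinl : ∀ y : ℝ, 0 ≤ Real.sin (latD c y) := fun y =>
    Real.sin_nonneg_of_nonneg_of_le_pi (latD_nonneg hc) (by linarith [latD_le (x := y) hc])
  have step4 : ∫ q : ℝ × ℝ, (ρ q.1 * ρ q.2) * G q
      = ∫ q in polarCoord.target,
          (q.1 * ((2*π)⁻¹ * Real.exp (-q.1^2/2)) * q.1 ^ p) *
            Real.sin (latD c (q.2 + π/2)) ^ p := by
    rw [← integral_comp_polarCoord_symm]
    refine setIntegral_congr_fun polarCoord.open_target.measurableSet (fun q hq => ?_)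
    rw [polarCoord_target] at hq
    have hr : 0 < q.1 := hq.1
    have hGval : G (polarCoord.symm q) = q.1 ^ p * Real.sin (latD c (q.2 + π/2)) ^ p := by
      rw [polarCoord_symm_apply, hG]
      simp only
      have h1 : ∀ j : Fin n,
          |q.1 * Real.cos q.2 * Real.cos ((j:ℝ) * π / n)
            + q.1 * Real.sin q.2 * Real.sin ((j:ℝ) * π / n)|
          = q.1 * |Real.sin ((q.2 + π/2) - (j:ℝ) * (π/n))| := by
        intro j
        rw [show q.1 * Real.cos q.2 * Real.cos ((j:ℝ) * π / n)
              + q.1 * Real.sin q.2 * Real.sin ((j:ℝ) * π / n)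
            = q.1 * (Real.cos q.2 * Real.cos ((j:ℝ) * (π/n))
              + Real.sin q.2 * Real.sin ((j:ℝ) * (π/n))) by ring,
          ← Real.cos_sub, abs_mul, abs_of_pos hr]
        congr 1
        rw [← Real.sin_add_pi_div_two]
        congr 1
        ring
      simp_rw [h1]
      rw [← Real.mul_iInf_of_nonneg hr.le, inf_abs_sin n hn (q.2 + π/2),
        Real.mul_rpow hr.le (hsinl _)]
    have hρval : ρ (q.1 * Real.cos q.2) * ρ (q.1 * Real.sin q.2)
        = (2*π)⁻¹ * Real.exp (-q.1^2/2) := by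
      rw [hρx, hρx,
        show (√(2*π))⁻¹ * Real.exp (-(q.1 * Real.cos q.2)^2/2)
              * ((√(2*π))⁻¹ * Real.exp (-(q.1 * Real.sin q.2)^2/2))
            = ((√(2*π)) * (√(2*π)))⁻¹ * (Real.exp (-(q.1 * Real.cos q.2)^2/2)
              * Real.exp (-(q.1 * Real.sin q.2)^2/2)) by ring,
        Real.mul_self_sqrt (by positivity), ← Real.exp_add,
        show -(q.1 * Real.cos q.2)^2/2 + -(q.1 * Real.sin q.2)^2/2 = -q.1^2/2 by
          linear_combination (-(q.1^2)/2) * (Real.sin_sq_add_cos_sq q.2)]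
    have : (ρ (polarCoord.symm q).1 * ρ (polarCoord.symm q).2) * G (polarCoord.symm q)
        = ((2*π)⁻¹ * Real.exp (-q.1^2/2)) * (q.1 ^ p * Real.sin (latD c (q.2 + π/2)) ^ p) := by
      rw [hGval, polarCoord_symm_apply]
      simp only
      rw [hρval]
    rw [smul_eq_mul, this]
    ring
  have step5 : ∫ q in polarCoord.target,
      (q.1 * ((2*π)⁻¹ * Real.exp (-q.1^2/2)) * q.1 ^ p) * Real.sin (latD c (q.2 + π/2)) ^ p
      = (∫ r in Set.Ioi (0:ℝ), r * ((2*π)⁻¹ * Real.exp (-r^2/2)) * r ^ p)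
        * ∫ θ in Set.Ioo (-π) π, Real.sin (latD c (θ + π/2)) ^ p := by
    rw [polarCoord_target, Measure.volume_eq_prod]
    exact setIntegral_prod_mul (fun r : ℝ => r * ((2*π)⁻¹ * Real.exp (-r^2/2)) * r ^ p)
      (fun θ : ℝ => Real.sin (latD c (θ + π/2)) ^ p) _ _
  have hrad : (∫ r in Set.Ioi (0:ℝ), r * ((2*π)⁻¹ * Real.exp (-r^2/2)) * r ^ p)
      = (2*π)⁻¹ * (2 ^ (p/2) * Real.Gamma (1 + p/2)) := by
    rw [show (fun r : ℝ => r * ((2*π)⁻¹ * Real.exp (-r^2/2)) * r ^ p)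
        = fun r => (2*π)⁻¹ * (r * Real.exp (-r^2/2) * r ^ p) by funext r; ring,
      integral_const_mul, radial_integral p hp]
  rw [step1, hprod, hden, step3, step4, step5, hrad, angular_integral n hn p hp]
  have hπ : (π:ℝ) ≠ 0 := pi_ne_zero
  field_simp
  ring
end

section
/- The double integral (12/π) ∫₀¹∫₀¹ s(1 − s − st)² / (1 + s² + s²t²)^{5/2} ds dt is strictly greater than 1 − 2√2/π. -/
open Real MeasureTheory

noncomputable def GG (t s : ℝ) : ℝ :=
  s * (1 - s - s * t) ^ 2 *
    (87/100 - 41/20 * (s^2 + s^2*t^2) + 103/50 * (s^2 + s^2*t^2)^2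
      - (s^2 + s^2*t^2)^3 + 19/100 * (s^2 + s^2*t^2)^4)

noncomputable def cc (t : ℝ) : ℕ → ℝ
  | 1 => (87/100)
  | 2 => (-87/50) + (-87/50)*t
  | 3 => (-59/50) + (87/50)*t + (-59/50)*t^2
  | 4 => (41/10) + (41/10)*t + (41/10)*t^2 + (41/10)*t^3
  | 5 => (1/100) + (-41/10)*t + (1/50)*t^2 + (-41/10)*t^3 + (1/100)*t^4
  | 6 => (-103/25) + (-103/25)*t + (-206/25)*t^2 + (-206/25)*t^3 + (-103/25)*t^4 + (-103/25)*t^5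
  | 7 => (53/50) + (103/25)*t + (159/50)*t^2 + (206/25)*t^3 + (159/50)*t^4 + (103/25)*t^5 + (53/50)*t^6
  | 8 => (2) + (2)*t + (6)*t^2 + (6)*t^3 + (6)*t^4 + (6)*t^5 + (2)*t^6 + (2)*t^7
  | 9 => (-81/100) + (-2)*t + (-81/25)*t^2 + (-6)*t^3 + (-243/50)*t^4 + (-6)*t^5 + (-81/25)*t^6 + (-2)*t^7 + (-81/100)*t^8
  | 10 => (-19/50) + (-19/50)*t + (-38/25)*t^2 + (-38/25)*t^3 + (-57/25)*t^4 + (-57/25)*t^5 + (-38/25)*t^6 + (-38/25)*t^7 + (-19/50)*t^8 + (-19/50)*t^9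
  | 11 => (19/100) + (19/50)*t + (19/20)*t^2 + (38/25)*t^3 + (19/10)*t^4 + (57/25)*t^5 + (19/10)*t^6 + (38/25)*t^7 + (19/20)*t^8 + (19/50)*t^9 + (19/100)*t^10
  | _ => 0

noncomputable def QQ (t : ℝ) : ℝ :=
  (33337/693000) + (-8671/138600)*t + (7471/231000)*t^2 + (86/1925)*t^3
    + (-26647/462000)*t^4 + (-1117/46200)*t^5 + (10073/198000)*t^6 + (53/4950)*t^7
    + (-2401/66000)*t^8 + (-19/6600)*t^9 + (19/1200)*t^10

noncomputable def dd : ℕ → ℝ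
  | 0 => (33337/693000)
  | 1 => (-8671/138600)
  | 2 => (7471/231000)
  | 3 => (86/1925)
  | 4 => (-26647/462000)
  | 5 => (-1117/46200)
  | 6 => (10073/198000)
  | 7 => (53/4950)
  | 8 => (-2401/66000)
  | 9 => (-19/6600)
  | 10 => (19/1200)
  | _ => 0

lemma GG_cont (t : ℝ) : Continuous (GG t) := by
  unfold GG; fun_prop

lemma QQ_cont : Continuous QQ := by
  unfold QQ; fun_prop

lemma FF_cont2 : Continuous (fun p : ℝ × ℝ =>
    p.2 * (1 - p.2 - p.2 * p.1) ^ 2 / (1 + p.2 ^ 2 + p.2 ^ 2 * p.1 ^ 2) ^ ((5 : ℝ) / 2)) := by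
  apply Continuous.div
  · fun_prop
  · apply Continuous.rpow_const
    · fun_prop
    · intro p; left; positivity
  · intro p
    exact ne_of_gt (Real.rpow_pos_of_pos (by positivity) _)

lemma FF_cont (t : ℝ) : Continuous (fun s : ℝ =>
    s * (1 - s - s * t) ^ 2 / (1 + s ^ 2 + s ^ 2 * t ^ 2) ^ ((5 : ℝ) / 2)) :=
  FF_cont2.comp (Continuous.prodMk continuous_const continuous_id)

lemma integral_GG (t : ℝ) : ∫ s in (0:ℝ)..1, GG t s = QQ t := by
  have h : (fun s : ℝ => GG t s) = fun s => ∑ m ∈ Finset.range 12, cc t m * s ^ m := by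
    funext s; simp only [GG, cc, Finset.sum_range_succ, Finset.sum_range_zero]; ring
  rw [h, intervalIntegral.integral_finset_sum (f := fun m s => cc t m * s ^ m)
    (fun m _ => ((continuous_const.mul (continuous_pow m)).intervalIntegrable 0 1))]
  simp only [intervalIntegral.integral_const_mul, integral_pow]
  simp only [Finset.sum_range_succ, Finset.sum_range_zero, cc, QQ]
  norm_num
  ring

lemma integral_QQ : ∫ t in (0:ℝ)..1, QQ t = 42953/1485000 := by
  have h : (fun t : ℝ => QQ t) = fun t => ∑ j ∈ Finset.range 11, dd j * t ^ j := by
    funext t; simp only [QQ, dd, Finset.sum_range_succ, Finset.sum_range_zero]; ring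
  rw [h, intervalIntegral.integral_finset_sum (f := fun j t => dd j * t ^ j)
    (fun j _ => ((continuous_const.mul (continuous_pow j)).intervalIntegrable 0 1))]
  simp only [intervalIntegral.integral_const_mul, integral_pow]
  simp only [Finset.sum_range_succ, Finset.sum_range_zero, dd]
  norm_num

lemma keyD (x : ℝ) (hx0 : 0 ≤ x) :
    (1 + x) ^ ((5:ℝ)/2) ≤ (1 + x)^2 * (1 + x/2) := by
  have h1x : (0:ℝ) < 1 + x := by linarith
  have hsplit : (1 + x) ^ ((5:ℝ)/2) = (1 + x)^2 * Real.sqrt (1 + x) := by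
    rw [Real.sqrt_eq_rpow, ← Real.rpow_natCast (1+x) 2, ← Real.rpow_add h1x]
    norm_num
  rw [hsplit]
  have hsq : Real.sqrt (1 + x) ≤ 1 + x/2 := by
    rw [show (1:ℝ) + x/2 = Real.sqrt ((1 + x/2)^2) from (Real.sqrt_sq (by linarith)).symm]
    exact Real.sqrt_le_sqrt (by nlinarith)
  nlinarith [sq_nonneg (1+x)]

lemma keyP (x : ℝ) (hx0 : 0 ≤ x) (hx2 : x ≤ 2) :
    87/100 - 41/20*x + 103/50*x^2 - x^3 + 19/100*x^4 ≤ 1 / ((1 + x)^2 * (1 + x/2)) := by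
  rw [le_div_iff₀ (by positivity)]
  nlinarith [sq_nonneg x, sq_nonneg (x-1), sq_nonneg (x-2),
    mul_nonneg hx0 (sub_nonneg.2 hx2), sq_nonneg (x*(2-x)), sq_nonneg (x^2-x), sq_nonneg (x^3)]

lemma GG_le_FF {t s : ℝ} (ht : t ∈ Set.Icc (0:ℝ) 1) (hs : s ∈ Set.Icc (0:ℝ) 1) :
    GG t s ≤ s * (1 - s - s * t) ^ 2 / (1 + s ^ 2 + s ^ 2 * t ^ 2) ^ ((5 : ℝ) / 2) := by
  obtain ⟨ht0, ht1⟩ := ht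
  obtain ⟨hs0, hs1⟩ := hs
  have hs2 : s^2 ≤ 1 := by nlinarith
  have hst2 : s^2*t^2 ≤ 1 := by nlinarith [sq_nonneg s, sq_nonneg t]
  have hx0 : 0 ≤ s^2 + s^2*t^2 := by positivity
  have hx2 : s^2 + s^2*t^2 ≤ 2 := by linarith
  have hnum : 0 ≤ s * (1 - s - s*t)^2 := by positivity
  have hDpos : 0 < (1 + (s^2 + s^2*t^2)) ^ ((5:ℝ)/2) :=
    Real.rpow_pos_of_pos (by positivity) _
  have hEpos : 0 < (1 + (s^2 + s^2*t^2))^2 * (1 + (s^2 + s^2*t^2)/2) := by positivity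
  have step1 : GG t s ≤ s * (1 - s - s*t)^2 /
      ((1 + (s^2 + s^2*t^2))^2 * (1 + (s^2 + s^2*t^2)/2)) := by
    have h := mul_le_mul_of_nonneg_left (keyP _ hx0 hx2) hnum
    unfold GG
    calc s * (1 - s - s * t) ^ 2 *
        (87/100 - 41/20 * (s^2 + s^2*t^2) + 103/50 * (s^2 + s^2*t^2)^2
          - (s^2 + s^2*t^2)^3 + 19/100 * (s^2 + s^2*t^2)^4)
        ≤ s * (1 - s - s*t)^2 * (1 / ((1 + (s^2 + s^2*t^2))^2 * (1 + (s^2 + s^2*t^2)/2))) := h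
      _ = s * (1 - s - s*t)^2 / ((1 + (s^2 + s^2*t^2))^2 * (1 + (s^2 + s^2*t^2)/2)) := by
          ring
  have step2 : s * (1 - s - s*t)^2 /
      ((1 + (s^2 + s^2*t^2))^2 * (1 + (s^2 + s^2*t^2)/2))
      ≤ s * (1 - s - s*t)^2 / ((1 + (s^2 + s^2*t^2)) ^ ((5:ℝ)/2)) :=
    div_le_div_of_nonneg_left hnum hDpos (keyD _ hx0)
  have hfin : (1 + s ^ 2 + s ^ 2 * t ^ 2) ^ ((5:ℝ)/2)
      = (1 + (s^2 + s^2*t^2)) ^ ((5:ℝ)/2) := by ring_nf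
  rw [hfin]
  exact le_trans step1 step2

lemma FF_le_one {t s : ℝ} (ht : t ∈ Set.Icc (0:ℝ) 1) (hs : s ∈ Set.Icc (0:ℝ) 1) :
    ‖s * (1 - s - s * t) ^ 2 / (1 + s ^ 2 + s ^ 2 * t ^ 2) ^ ((5 : ℝ) / 2)‖ ≤ 1 := by
  obtain ⟨ht0, ht1⟩ := ht
  obtain ⟨hs0, hs1⟩ := hs
  have hDpos : 0 < (1 + s ^ 2 + s ^ 2 * t ^ 2) ^ ((5:ℝ)/2) :=
    Real.rpow_pos_of_pos (by positivity) _
  have hD1 : (1:ℝ) ≤ (1 + s ^ 2 + s ^ 2 * t ^ 2) ^ ((5:ℝ)/2) := by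
    have h := Real.rpow_le_rpow (zero_le_one)
      (by nlinarith [sq_nonneg s, sq_nonneg (s*t)] : (1:ℝ) ≤ 1 + s ^ 2 + s ^ 2 * t ^ 2)
      (by norm_num : (0:ℝ) ≤ (5:ℝ)/2)
    rwa [Real.one_rpow] at h
  have hnum : 0 ≤ s * (1 - s - s*t)^2 := by positivity
  have hu0 : 0 ≤ s + s*t := by positivity
  have hu2 : s + s*t ≤ 2 := by nlinarith
  have hsq1 : (1 - s - s*t)^2 ≤ 1 := by nlinarith
  have hnum1 : s * (1 - s - s*t)^2 ≤ 1 := by nlinarith [sq_nonneg (1 - s - s*t)]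
  have hF0 : 0 ≤ s * (1 - s - s * t) ^ 2 / (1 + s ^ 2 + s ^ 2 * t ^ 2) ^ ((5:ℝ)/2) := by
    positivity
  rw [Real.norm_eq_abs, abs_of_nonneg hF0, div_le_one hDpos]
  linarith

/-- `(12/π) ∫₀¹∫₀¹ s(1-s-st)²/(1+s²+s²t²)^{5/2} ds dt > 1 - 2√2/π`. -/
theorem double_integral_gt :
    1 - 2 * Real.sqrt 2 / π
      < (12 / π) * ∫ t in Set.Icc (0 : ℝ) 1, ∫ s in Set.Icc (0 : ℝ) 1,
          s * (1 - s - s * t) ^ 2 / (1 + s ^ 2 + s ^ 2 * t ^ 2) ^ ((5 : ℝ) / 2) := by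
  -- inner bound
  have hinner : ∀ t ∈ Set.Icc (0:ℝ) 1, QQ t ≤ ∫ s in Set.Icc (0:ℝ) 1,
      s * (1 - s - s * t) ^ 2 / (1 + s ^ 2 + s ^ 2 * t ^ 2) ^ ((5 : ℝ) / 2) := by
    intro t ht
    have hGint : IntegrableOn (GG t) (Set.Icc (0:ℝ) 1) := (GG_cont t).integrableOn_Icc
    have hFint : IntegrableOn (fun s : ℝ =>
        s * (1 - s - s * t) ^ 2 / (1 + s ^ 2 + s ^ 2 * t ^ 2) ^ ((5 : ℝ) / 2))
        (Set.Icc (0:ℝ) 1) := (FF_cont t).integrableOn_Icc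
    have heq : ∫ s in Set.Icc (0:ℝ) 1, GG t s = QQ t := by
      rw [integral_Icc_eq_integral_Ioc, ← intervalIntegral.integral_of_le zero_le_one,
        integral_GG]
    calc QQ t = ∫ s in Set.Icc (0:ℝ) 1, GG t s := heq.symm
      _ ≤ _ := setIntegral_mono_on hGint hFint measurableSet_Icc (fun s hs => GG_le_FF ht hs)
  -- integrability of the inner integral as a function of t
  have hmeas : StronglyMeasurable (fun t : ℝ => ∫ s in Set.Icc (0:ℝ) 1,
      s * (1 - s - s * t) ^ 2 / (1 + s ^ 2 + s ^ 2 * t ^ 2) ^ ((5 : ℝ) / 2)) :=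
    FF_cont2.stronglyMeasurable.integral_prod_right'
  have hbound : ∀ t ∈ Set.Icc (0:ℝ) 1, ‖∫ s in Set.Icc (0:ℝ) 1,
      s * (1 - s - s * t) ^ 2 / (1 + s ^ 2 + s ^ 2 * t ^ 2) ^ ((5 : ℝ) / 2)‖ ≤ 1 := by
    intro t ht
    have h := norm_setIntegral_le_of_norm_le_const (C := 1)
      (by simp [Real.volume_Icc] : volume (Set.Icc (0:ℝ) 1) < ⊤)
      (fun s hs => FF_le_one ht hs)
    simpa [Real.volume_Icc, Real.volume_real_Icc] using h
  have hInnerInt : IntegrableOn (fun t : ℝ => ∫ s in Set.Icc (0:ℝ) 1,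
      s * (1 - s - s * t) ^ 2 / (1 + s ^ 2 + s ^ 2 * t ^ 2) ^ ((5 : ℝ) / 2))
      (Set.Icc (0:ℝ) 1) := by
    apply Integrable.mono' (integrable_const (1:ℝ)) hmeas.aestronglyMeasurable.restrict
    exact (ae_restrict_iff' measurableSet_Icc).2 (Filter.Eventually.of_forall hbound)
  have hQint : IntegrableOn QQ (Set.Icc (0:ℝ) 1) := QQ_cont.integrableOn_Icc
  have houter : (42953/1485000 : ℝ) ≤ ∫ t in Set.Icc (0:ℝ) 1, ∫ s in Set.Icc (0:ℝ) 1,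
      s * (1 - s - s * t) ^ 2 / (1 + s ^ 2 + s ^ 2 * t ^ 2) ^ ((5 : ℝ) / 2) := by
    have heq : ∫ t in Set.Icc (0:ℝ) 1, QQ t = 42953/1485000 := by
      rw [integral_Icc_eq_integral_Ioc, ← intervalIntegral.integral_of_le zero_le_one,
        integral_QQ]
    calc (42953/1485000 : ℝ) = ∫ t in Set.Icc (0:ℝ) 1, QQ t := heq.symm
      _ ≤ _ := setIntegral_mono_on hQint hInnerInt measurableSet_Icc hinner
  -- numerics
  have hpi : π < 3.15 := Real.pi_lt_d2
  have hpi0 : (0:ℝ) < π := Real.pi_pos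
  have hsqrt2 : (1.41:ℝ) < Real.sqrt 2 := by
    nlinarith [Real.sq_sqrt (by norm_num : (0:ℝ) ≤ 2), Real.sqrt_nonneg 2]
  have hmain : 1 - 2 * Real.sqrt 2 / π < 12 / π * (42953/1485000 : ℝ) := by
    rw [sub_lt_iff_lt_add, show (12:ℝ)/π * (42953/1485000) + 2 * Real.sqrt 2 / π
      = (12 * (42953/1485000) + 2 * Real.sqrt 2) / π by ring, lt_div_iff₀ hpi0, one_mul]
    nlinarith
  calc 1 - 2 * Real.sqrt 2 / π < 12 / π * (42953/1485000 : ℝ) := hmain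
    _ ≤ _ := by
        apply mul_le_mul_of_nonneg_left houter
        positivity
end
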